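/- Let u, v ∈ V with u ≠ v, and let W(u) and W(v) be two independent √c-walks from u and from v respectively. Then the probability that W(u) and W(v) meet is at most c; i.e., s(u,v) ≤ c for u ≠ v. -/

import Mathlib

open scoped BigOperators Classical

variable {V : Type*}

/-- `p` is a possible realization of a `√c`-walk from `u`: it is nonempty,
starts at `u`, and each step moves to an in-neighbor of the current node. -/
def IsWalkFrom (I : V → Finset V) (u : V) (p : List V) : Prop :=
  p.head? = some u ∧ List.Chain' (fun a b => b ∈ I a) p

/-- The probability that the `√c`-walk from `u` is exactly the finite sequence `p`:
`(1−√c)·∏_{k=1}^{ℓ−1} (√c/|I(u_k)|)` if `p = (u_1,…,u_ℓ)` is a walk from `u`,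
and `0` otherwise. -/
noncomputable def walkWeight (I : V → Finset V) (c : ℝ) (u : V) (p : List V) : ℝ :=
  if IsWalkFrom I u p then
    (1 - Real.sqrt c) *
      ∏ k ∈ Finset.range (p.length - 1), Real.sqrt c / ((I (p.getD k u)).card : ℝ)
  else 0

private lemma head?_eq_cons {p : List V} {u : V} (h : p.head? = some u) : p = u :: p.tail := by
  cases p <;> simp_all

private lemma walkWeight_nonneg (I : V → Finset V) {c : ℝ} (hc1 : c ≤ 1)
    (u : V) (p : List V) : 0 ≤ walkWeight I c u p := by
  unfold walkWeight
  split
  · have h1 : Real.sqrt c ≤ 1 := Real.sqrt_le_one.mpr hc1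
    refine mul_nonneg (by linarith) (Finset.prod_nonneg fun k _ => ?_)
    positivity
  · exact le_refl _

private lemma walkWeight_ne_zero {I : V → Finset V} {c : ℝ} {u : V} {p : List V}
    (h : walkWeight I c u p ≠ 0) : IsWalkFrom I u p := by
  by_contra hw; exact h (by simp [walkWeight, hw])

private lemma walk_struct {I : V → Finset V} {u : V} {p : List V}
    (h : IsWalkFrom I u p) (h2 : 2 ≤ p.length) :
    ∃ w q, p = u :: q ∧ q.head? = some w ∧ w ∈ I u ∧ IsWalkFrom I w q := by
  match p, h2 with
  | a :: b :: r, _ =>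
    obtain ⟨h1, hchain⟩ := h
    obtain rfl : a = u := by simpa using h1
    rw [List.Chain', List.isChain_cons_cons] at hchain
    exact ⟨b, b :: r, rfl, rfl, hchain.1, rfl, hchain.2⟩

private lemma walkWeight_cons (I : V → Finset V) (c : ℝ) (u w : V) (q : List V)
    (hq : q.head? = some w) (hw : w ∈ I u) (hwalk : IsWalkFrom I w q) :
    walkWeight I c u (u :: q) = Real.sqrt c / ((I u).card : ℝ) * walkWeight I c w q := by
  cases q with
  | nil => simp at hq
  | cons a q' =>
    obtain rfl : w = a := by simpa using hq.symm
    have hcond : IsWalkFrom I u (u :: w :: q') := by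
      refine ⟨rfl, ?_⟩
      rw [List.Chain', List.isChain_cons_cons]
      exact ⟨hw, hwalk.2⟩
    rw [walkWeight, if_pos hcond, walkWeight, if_pos hwalk]
    simp only [List.length_cons, Nat.add_sub_cancel]
    rw [Finset.prod_range_succ']
    have hprod : ∀ i ∈ Finset.range q'.length,
        Real.sqrt c / ((I ((u :: w :: q').getD (i+1) u)).card : ℝ)
          = Real.sqrt c / ((I ((w :: q').getD i w)).card : ℝ) := by
      intro i hi
      have hi' : i < (w :: q').length := by
        simpa using Nat.lt_succ_of_lt (Finset.mem_range.mp hi)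
      rw [List.getD_cons_succ, List.getD_eq_getElem _ _ hi', List.getD_eq_getElem _ _ hi']
    rw [Finset.prod_congr rfl hprod]
    simp only [List.getD_cons_zero]
    ring

private lemma step_lemma (I : V → Finset V) (hI : ∀ v, (I v).Nonempty)
    {c : ℝ} (hc0 : 0 < c) (hc1 : c < 1) (n : ℕ)
    (IH : ∀ (w : V) (B : Finset (List V)), (∀ q ∈ B, q.length ≤ n) →
      ∑ q ∈ B, walkWeight I c w q ≤ 1)
    (u : V) (A : Finset (List V))
    (hlen : ∀ p ∈ A, p.length ≤ n + 1) (h2 : ∀ p ∈ A, 2 ≤ p.length) :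
    ∑ p ∈ A, walkWeight I c u p ≤ Real.sqrt c := by
  classical
  have hs0 : (0:ℝ) ≤ Real.sqrt c := Real.sqrt_nonneg c
  have hcard : (0:ℝ) < ((I u).card : ℝ) := by
    exact_mod_cast Finset.card_pos.mpr (hI u)
  have hrestrict : ∑ p ∈ A.filter (fun p => IsWalkFrom I u p), walkWeight I c u p
      = ∑ p ∈ A, walkWeight I c u p := by
    refine Finset.sum_filter_of_ne ?_
    intro p _ hne
    exact walkWeight_ne_zero hne
  rw [← hrestrict]
  set A' := A.filter (fun p => IsWalkFrom I u p) with hA'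
  have hA'mem : ∀ p ∈ A', IsWalkFrom I u p ∧ 2 ≤ p.length ∧ p.length ≤ n + 1 := by
    intro p hp
    rw [hA', Finset.mem_filter] at hp
    exact ⟨hp.2, h2 p hp.1, hlen p hp.1⟩
  have hmaps : ∀ p ∈ A', p.tail.headD u ∈ I u := by
    intro p hp
    obtain ⟨hw, h2p, _⟩ := hA'mem p hp
    obtain ⟨w, q, rfl, hqh, hwI, _⟩ := walk_struct hw h2p
    rw [head?_eq_cons hqh]
    simpa using hwI
  rw [← Finset.sum_fiberwise_of_maps_to hmaps (walkWeight I c u)]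
  have hinner : ∀ w ∈ I u, ∑ p ∈ A'.filter (fun p => p.tail.headD u = w), walkWeight I c u p
      ≤ Real.sqrt c / ((I u).card : ℝ) := by
    intro w hwIu
    set B := A'.filter (fun p => p.tail.headD u = w) with hB
    have hBmem : ∀ p ∈ B, p = u :: p.tail ∧ p.tail.head? = some w ∧
        IsWalkFrom I w p.tail := by
      intro p hp
      rw [hB, Finset.mem_filter] at hp
      obtain ⟨hw', h2p, _⟩ := hA'mem p hp.1
      obtain ⟨w', q, rfl, hqh, _, hwalkq⟩ := walk_struct hw' h2p
      have hq := head?_eq_cons hqh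
      have : w' = w := by
        have := hp.2
        simp only [List.tail_cons] at this ⊢
        rw [hq] at this
        simpa using this
      subst this
      simpa using ⟨hqh, hwalkq⟩
    have hinj : ∀ p ∈ B, ∀ p' ∈ B, p.tail = p'.tail → p = p' := by
      intro p hp p' hp' h
      rw [(hBmem p hp).1, (hBmem p' hp').1, h]
    have himg : ∑ p ∈ B, walkWeight I c u p
        = Real.sqrt c / ((I u).card : ℝ) * ∑ q ∈ B.image List.tail, walkWeight I c w q := by
      rw [Finset.mul_sum, Finset.sum_image hinj]
      refine Finset.sum_congr rfl fun p hp => ?_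
      obtain ⟨hcons, hqh, hwalkq⟩ := hBmem p hp
      conv_lhs => rw [hcons]
      exact walkWeight_cons I c u w p.tail hqh hwIu hwalkq
    rw [himg]
    have hle1 : ∑ q ∈ B.image List.tail, walkWeight I c w q ≤ 1 := by
      refine IH w _ ?_
      intro q hq
      obtain ⟨p, hp, rfl⟩ := Finset.mem_image.mp hq
      have := (hA'mem p (Finset.mem_filter.mp (hB ▸ hp)).1).2.2
      simp only [List.length_tail]
      omega
    calc Real.sqrt c / ((I u).card : ℝ) * ∑ q ∈ B.image List.tail, walkWeight I c w q
        ≤ Real.sqrt c / ((I u).card : ℝ) * 1 := by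
          refine mul_le_mul_of_nonneg_left hle1 (by positivity)
      _ = Real.sqrt c / ((I u).card : ℝ) := mul_one _
  calc ∑ w ∈ I u, ∑ p ∈ A'.filter (fun p => p.tail.headD u = w), walkWeight I c u p
      ≤ ∑ w ∈ I u, Real.sqrt c / ((I u).card : ℝ) := Finset.sum_le_sum hinner
    _ = ((I u).card : ℝ) * (Real.sqrt c / ((I u).card : ℝ)) := by
        rw [Finset.sum_const, nsmul_eq_mul]
    _ = Real.sqrt c := by field_simp

private lemma sum_walkWeight_le_one (I : V → Finset V) (hI : ∀ v, (I v).Nonempty)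
    {c : ℝ} (hc0 : 0 < c) (hc1 : c < 1) :
    ∀ (n : ℕ) (u : V) (A : Finset (List V)), (∀ p ∈ A, p.length ≤ n) →
      ∑ p ∈ A, walkWeight I c u p ≤ 1 := by
  intro n
  induction n with
  | zero =>
    intro u A h
    have hz : ∀ p ∈ A, walkWeight I c u p = 0 := by
      intro p hp
      have hp0 : p = [] := List.length_eq_zero_iff.mp (Nat.le_zero.mp (h p hp))
      subst hp0
      simp [walkWeight, IsWalkFrom]
    rw [Finset.sum_eq_zero hz]
    norm_num
  | succ n ih =>
    intro u A h
    classical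
    have hs1 : Real.sqrt c ≤ 1 := Real.sqrt_le_one.mpr hc1.le
    rw [← Finset.sum_filter_add_sum_filter_not A (fun p => 2 ≤ p.length)]
    have h1 : ∑ p ∈ A.filter (fun p => 2 ≤ p.length), walkWeight I c u p ≤ Real.sqrt c := by
      refine step_lemma I hI hc0 hc1 n ih u _ ?_ ?_ <;>
        · intro p hp
          rw [Finset.mem_filter] at hp
          first
          | exact h p hp.1
          | exact hp.2
    have h2 : ∑ p ∈ A.filter (fun p => ¬ 2 ≤ p.length), walkWeight I c u p
        ≤ 1 - Real.sqrt c := by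
      calc ∑ p ∈ A.filter (fun p => ¬ 2 ≤ p.length), walkWeight I c u p
          ≤ ∑ p ∈ A.filter (fun p => ¬ 2 ≤ p.length),
              (if p = [u] then 1 - Real.sqrt c else 0) := by
            refine Finset.sum_le_sum fun p hp => ?_
            rw [Finset.mem_filter] at hp
            split
            · rename_i hpu
              subst hpu
              rw [walkWeight, if_pos ⟨rfl, List.isChain_singleton u⟩]
              simp
            · rename_i hpu
              have hlen : p.length ≤ 1 := by omega
              rw [walkWeight, if_neg]
              rintro ⟨hh, -⟩
              match p, hlen, hh, hpu with
              | [], _, hh, _ => simp at hh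
              | [x], _, hh, hpu =>
                obtain rfl : x = u := by simpa using hh
                exact hpu rfl
        _ = if [u] ∈ A.filter (fun p => ¬ 2 ≤ p.length) then 1 - Real.sqrt c else 0 :=
            Finset.sum_ite_eq' _ _ _
        _ ≤ 1 - Real.sqrt c := by split <;> simp [hs1]
    linarith

private lemma sum_walkWeight_two_le (I : V → Finset V) (hI : ∀ v, (I v).Nonempty)
    {c : ℝ} (hc0 : 0 < c) (hc1 : c < 1) (u : V) (A : Finset (List V))
    (h2 : ∀ p ∈ A, 2 ≤ p.length) :
    ∑ p ∈ A, walkWeight I c u p ≤ Real.sqrt c := by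
  classical
  refine step_lemma I hI hc0 hc1 (A.sup List.length) ?_ u A ?_ h2
  · exact fun w B hB => sum_walkWeight_le_one I hI hc0 hc1 _ w B hB
  · intro p hp
    exact le_trans (Finset.le_sup hp) (Nat.le_succ _)

/-- Two finite sequences meet: for some index both sequences are long enough and
their entries at that index coincide. -/
def Meets (w₁ w₂ : List V) : Prop :=
  ∃ k, k < w₁.length ∧ k < w₂.length ∧ w₁[k]? = w₂[k]?

/-- SimRank `s(u,v)`: the probability that two independent `√c`-walks from `u`
and from `v` meet. -/
noncomputable def simRank (I : V → Finset V) (c : ℝ) (u v : V) : ℝ :=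
  ∑' w : List V × List V,
    walkWeight I c u w.1 * walkWeight I c v w.2 * (if Meets w.1 w.2 then 1 else 0)

/-- For distinct nodes `u ≠ v`, the probability that two independent
`√c`-walks from `u` and from `v` meet is at most `c`: `s(u,v) ≤ c`. -/
theorem simRank_le_c [Fintype V]
    (I : V → Finset V) (hI : ∀ v, (I v).Nonempty)
    (c : ℝ) (hc0 : 0 < c) (hc1 : c < 1)
    (u v : V) (huv : u ≠ v) :
    simRank I c u v ≤ c := by
  classical
  set F : List V × List V → ℝ := fun w =>
    walkWeight I c u w.1 * walkWeight I c v w.2 * (if Meets w.1 w.2 then 1 else 0) with hF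
  have hFnn : ∀ w, 0 ≤ F w := by
    intro w
    refine mul_nonneg (mul_nonneg (walkWeight_nonneg I hc1.le _ _)
      (walkWeight_nonneg I hc1.le _ _)) ?_
    split <;> norm_num
  set f' : List V → ℝ := fun p => if 2 ≤ p.length then walkWeight I c u p else 0 with hf'
  set g' : List V → ℝ := fun p => if 2 ≤ p.length then walkWeight I c v p else 0 with hg'
  have hf'nn : ∀ p, 0 ≤ f' p := by
    intro p; rw [hf']; dsimp only
    split
    · exact walkWeight_nonneg I hc1.le _ _
    · exact le_refl _
  have hg'nn : ∀ p, 0 ≤ g' p := by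
    intro p; rw [hg']; dsimp only
    split
    · exact walkWeight_nonneg I hc1.le _ _
    · exact le_refl _
  have hbound : ∀ t : Finset (List V × List V), ∑ w ∈ t, F w ≤ c := by
    intro t
    have hterm : ∀ w ∈ t, F w ≤ f' w.1 * g' w.2 := by
      intro w _
      by_cases hm : Meets w.1 w.2
      · by_cases h1 : walkWeight I c u w.1 = 0
        · rw [hF]; dsimp only
          rw [h1]
          simpa using mul_nonneg (hf'nn w.1) (hg'nn w.2)
        by_cases hv2 : walkWeight I c v w.2 = 0
        · rw [hF]; dsimp only
          rw [hv2]
          simpa using mul_nonneg (hf'nn w.1) (hg'nn w.2)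
        obtain ⟨k, hk1, hk2, hkeq⟩ := id hm
        have hwalk1 := walkWeight_ne_zero h1
        have hwalk2 := walkWeight_ne_zero hv2
        have hkpos : 0 < k := by
          rcases Nat.eq_zero_or_pos k with rfl | h
          · exfalso
            have e1 : w.1[0]? = some u := by
              rw [← List.head?_eq_getElem?]; exact hwalk1.1
            have e2 : w.2[0]? = some v := by
              rw [← List.head?_eq_getElem?]; exact hwalk2.1
            rw [e1, e2] at hkeq
            exact huv (by simpa using hkeq)
          · exact h
        have hl1 : 2 ≤ w.1.length := by omega
        have hl2 : 2 ≤ w.2.length := by omega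
        rw [hF, hf', hg']; dsimp only
        rw [if_pos hm, if_pos hl1, if_pos hl2, mul_one]
      · rw [hF]; dsimp only
        rw [if_neg hm, mul_zero]
        exact mul_nonneg (hf'nn w.1) (hg'nn w.2)
    calc ∑ w ∈ t, F w ≤ ∑ w ∈ t, f' w.1 * g' w.2 := Finset.sum_le_sum hterm
      _ ≤ ∑ w ∈ (t.image Prod.fst) ×ˢ (t.image Prod.snd), f' w.1 * g' w.2 :=
          Finset.sum_le_sum_of_subset_of_nonneg Finset.subset_product
            (fun w _ _ => mul_nonneg (hf'nn w.1) (hg'nn w.2))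
      _ = (∑ p ∈ t.image Prod.fst, f' p) * (∑ q ∈ t.image Prod.snd, g' q) := by
          rw [Finset.sum_mul_sum, Finset.sum_product]
      _ ≤ Real.sqrt c * Real.sqrt c := by
          have hA : ∀ (w : V) (B : Finset (List V)),
              ∑ p ∈ B, (if 2 ≤ p.length then walkWeight I c w p else 0) ≤ Real.sqrt c := by
            intro w B
            rw [Finset.sum_ite, Finset.sum_const, smul_zero, add_zero]
            exact sum_walkWeight_two_le I hI hc0 hc1 w _
              (fun p hp => (Finset.mem_filter.mp hp).2)
          refine mul_le_mul (hA u _) (hA v _) (Finset.sum_nonneg fun q _ => hg'nn q)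
            (Real.sqrt_nonneg c)
      _ = c := Real.mul_self_sqrt hc0.le
  have hsum : Summable F := summable_of_sum_le hFnn hbound
  exact Summable.tsum_le_of_sum_le hsum hbound
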